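/- For all natural numbers i > j: Σ_{k} (binom(i+k, 2k) mod 2)·(binom(2k+1, k-j) mod 2) = 2 when computed in ℤ, and it equals 1 when i = j, and 0 when i < j. In other words, the product M·L (over ℤ, with entries reduced mod 2 to {0,1} before multiplying) has entries 0 above the diagonal, 1 on the diagonal, and 2 below. -/
import Mathlib

open Finset

namespace MLaux

/-- Lucas' theorem for `p = 2`, in `% 2` form. -/
lemma lucas2 (n k : ℕ) :
    n.choose k % 2 = (Nat.choose (n % 2) (k % 2) * Nat.choose (n / 2) (k / 2)) % 2 :=
  Choose.choose_modEq_choose_mod_mul_choose_div_nat (p := 2)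

lemma L1 (n m : ℕ) : (2 * n).choose (2 * m) % 2 = n.choose m % 2 := by
  rw [lucas2]
  have h1 : 2 * n % 2 = 0 := by omega
  have h2 : 2 * n / 2 = n := by omega
  have h3 : 2 * m % 2 = 0 := by omega
  have h4 : 2 * m / 2 = m := by omega
  rw [h1, h2, h3, h4]; simp

lemma L2 (n m : ℕ) : (2 * n).choose (2 * m + 1) % 2 = 0 := by
  rw [lucas2]
  have h1 : 2 * n % 2 = 0 := by omega
  have h3 : (2 * m + 1) % 2 = 1 := by omega
  rw [h1, h3]; simp

lemma L3 (n m : ℕ) : (2 * n + 1).choose (2 * m) % 2 = n.choose m % 2 := by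
  rw [lucas2]
  have h1 : (2 * n + 1) % 2 = 1 := by omega
  have h2 : (2 * n + 1) / 2 = n := by omega
  have h3 : 2 * m % 2 = 0 := by omega
  have h4 : 2 * m / 2 = m := by omega
  rw [h1, h2, h3, h4]; simp

lemma L4 (n m : ℕ) : (2 * n + 1).choose (2 * m + 1) % 2 = n.choose m % 2 := by
  rw [lucas2]
  have h1 : (2 * n + 1) % 2 = 1 := by omega
  have h2 : (2 * n + 1) / 2 = n := by omega
  have h3 : (2 * m + 1) % 2 = 1 := by omega
  have h4 : (2 * m + 1) / 2 = m := by omega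
  rw [h1, h2, h3, h4]; simp

/-- `A i k = binom(i+k, 2k) mod 2`. -/
def A (i k : ℕ) : ℕ := (i + k).choose (2 * k) % 2
/-- `Cc i k = binom(i+k, 2k+1) mod 2`. -/
def Cc (i k : ℕ) : ℕ := (i + k).choose (2 * k + 1) % 2
/-- guarded `B k j = binom(2k+1, k-j) mod 2`. -/
def B (k j : ℕ) : ℕ := if j ≤ k then (2 * k + 1).choose (k - j) % 2 else 0
/-- guarded `E k j = binom(2k, k-j) mod 2`. -/
def E (k j : ℕ) : ℕ := if j ≤ k then (2 * k).choose (k - j) % 2 else 0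

lemma A_zero {i k : ℕ} (h : i < k) : A i k = 0 := by
  unfold A
  rw [Nat.choose_eq_zero_of_lt (by omega)]

lemma Cc_zero {i k : ℕ} (h : i ≤ k) : Cc i k = 0 := by
  unfold Cc
  rw [Nat.choose_eq_zero_of_lt (by omega)]

lemma A_ee (a c : ℕ) : A (2 * a) (2 * c) = A a c := by
  unfold A
  rw [show 2 * a + 2 * c = 2 * (a + c) by ring, L1]

lemma A_eo (a c : ℕ) : A (2 * a) (2 * c + 1) = Cc a c := by
  unfold A Cc
  rw [show 2 * a + (2 * c + 1) = 2 * (a + c) + 1 by ring, L3]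

lemma A_oe (a c : ℕ) : A (2 * a + 1) (2 * c) = A a c := by
  unfold A
  rw [show 2 * a + 1 + 2 * c = 2 * (a + c) + 1 by ring, L3]

lemma A_oo (a c : ℕ) : A (2 * a + 1) (2 * c + 1) = Cc (a + 1) c := by
  unfold A Cc
  rw [show 2 * a + 1 + (2 * c + 1) = 2 * (a + c + 1) by ring, L1,
    show a + c + 1 = a + 1 + c by ring]

lemma Cc_ee (a c : ℕ) : Cc (2 * a) (2 * c) = 0 := by
  unfold Cc
  rw [show 2 * a + 2 * c = 2 * (a + c) by ring, L2]

lemma Cc_eo (a c : ℕ) : Cc (2 * a) (2 * c + 1) = Cc a c := by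
  unfold Cc
  rw [show 2 * a + (2 * c + 1) = 2 * (a + c) + 1 by ring,
    show 2 * (2 * c + 1) + 1 = 2 * (2 * c + 1) + 1 from rfl, L4]

lemma Cc_oe (a c : ℕ) : Cc (2 * a + 1) (2 * c) = A a c := by
  unfold Cc A
  rw [show 2 * a + 1 + 2 * c = 2 * (a + c) + 1 by ring, L4]

lemma Cc_oo (a c : ℕ) : Cc (2 * a + 1) (2 * c + 1) = 0 := by
  unfold Cc
  rw [show 2 * a + 1 + (2 * c + 1) = 2 * (a + c + 1) by ring, L2]

lemma B_ee (c d : ℕ) : B (2 * c) (2 * d) = E c d := by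
  unfold B E
  by_cases h : d ≤ c
  · rw [if_pos (by omega), if_pos h, show 2 * c - 2 * d = 2 * (c - d) by omega,
      show 2 * (2 * c) + 1 = 2 * (2 * c) + 1 from rfl, L3]
  · rw [if_neg (by omega), if_neg h]

lemma B_eo (c d : ℕ) : B (2 * c) (2 * d + 1) = E c (d + 1) := by
  unfold B E
  by_cases h : d + 1 ≤ c
  · rw [if_pos (by omega), if_pos h, show 2 * c - (2 * d + 1) = 2 * (c - (d + 1)) + 1 by omega,
      L4]
  · rw [if_neg (by omega), if_neg h]

lemma B_oe (c d : ℕ) : B (2 * c + 1) (2 * d) = B c d := by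
  unfold B
  by_cases h : d ≤ c
  · rw [if_pos (by omega), if_pos h, show 2 * c + 1 - 2 * d = 2 * (c - d) + 1 by omega,
      show 2 * (2 * c + 1) + 1 = 2 * (2 * c + 1) + 1 from rfl, L4]
  · rw [if_neg (by omega), if_neg h]

lemma B_oo (c d : ℕ) : B (2 * c + 1) (2 * d + 1) = B c d := by
  unfold B
  by_cases h : d ≤ c
  · rw [if_pos (by omega), if_pos h, show 2 * c + 1 - (2 * d + 1) = 2 * (c - d) by omega, L3]
  · rw [if_neg (by omega), if_neg h]

lemma E_ee (c d : ℕ) : E (2 * c) (2 * d) = E c d := by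
  unfold E
  by_cases h : d ≤ c
  · rw [if_pos (by omega), if_pos h, show 2 * c - 2 * d = 2 * (c - d) by omega,
      show 2 * (2 * c) = 2 * (2 * c) from rfl, L1]
  · rw [if_neg (by omega), if_neg h]

lemma E_eo (c d : ℕ) : E (2 * c) (2 * d + 1) = 0 := by
  unfold E
  by_cases h : 2 * d + 1 ≤ 2 * c
  · rw [if_pos h, show 2 * c - (2 * d + 1) = 2 * (c - (d + 1)) + 1 by omega, L2]
  · rw [if_neg h]

lemma E_oe (c d : ℕ) : E (2 * c + 1) (2 * d) = 0 := by
  unfold E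
  by_cases h : d ≤ c
  · rw [if_pos (by omega), show 2 * c + 1 - 2 * d = 2 * (c - d) + 1 by omega, L2]
  · rw [if_neg (by omega)]

lemma E_oo (c d : ℕ) : E (2 * c + 1) (2 * d + 1) = B c d := by
  unfold E B
  by_cases h : d ≤ c
  · rw [if_pos (by omega), if_pos h, show 2 * c + 1 - (2 * d + 1) = 2 * (c - d) by omega,
      show 2 * (2 * c + 1) = 2 * (2 * c + 1) from rfl, L1]
  · rw [if_neg (by omega), if_neg h]

lemma sum_range_shrink {f : ℕ → ℕ} {M N : ℕ} (h : M ≤ N) (hz : ∀ k, M ≤ k → f k = 0) :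
    ∑ k ∈ range N, f k = ∑ k ∈ range M, f k := by
  refine (Finset.sum_subset (Finset.range_subset_range.2 h) ?_).symm
  intro x hx hx2
  exact hz x (by simpa using hx2)

lemma sum_range_double {M : Type*} [AddCommMonoid M] (f : ℕ → M) (n : ℕ) :
    ∑ k ∈ range (2 * n), f k = ∑ c ∈ range n, (f (2 * c) + f (2 * c + 1)) := by
  induction n with
  | zero => simp
  | succ n ih =>
    rw [sum_range_succ, ← ih, show 2 * (n + 1) = 2 * n + 1 + 1 by ring, sum_range_succ,
      sum_range_succ, add_assoc]

lemma UV (n : ℕ) : ∀ i j N : ℕ, i + j ≤ n → i < N →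
    (∑ k ∈ range N, Cc i k * B k j) = (if j < i then 1 else 0) ∧
    (∑ k ∈ range N, A i k * E k j) = (if j ≤ i then 1 else 0) := by
  induction n using Nat.strong_induction_on with
  | _ n ih =>
    intro i j N hn hN
    -- normalize the range to `2 * (i + 1)`
    have hUz : ∀ k, i + 1 ≤ k → Cc i k * B k j = 0 := by
      intro k hk; rw [Cc_zero (by omega), zero_mul]
    have hVz : ∀ k, i + 1 ≤ k → A i k * E k j = 0 := by
      intro k hk; rw [A_zero (by omega), zero_mul]
    have hU1 : ∑ k ∈ range N, Cc i k * B k j = ∑ k ∈ range (2 * (i + 1)), Cc i k * B k j := by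
      rw [sum_range_shrink (by omega) hUz, sum_range_shrink (M := i + 1) (N := 2 * (i + 1)) (by omega) hUz]
    have hV1 : ∑ k ∈ range N, A i k * E k j = ∑ k ∈ range (2 * (i + 1)), A i k * E k j := by
      rw [sum_range_shrink (by omega) hVz, sum_range_shrink (M := i + 1) (N := 2 * (i + 1)) (by omega) hVz]
    rw [hU1, hV1, sum_range_double, sum_range_double]
    by_cases hi0 : i = 0
    · subst hi0
      constructor
      · rw [if_neg (by omega)]
        refine Finset.sum_eq_zero ?_
        intro c _
        rw [Cc_zero (by omega), Cc_zero (by omega), zero_mul, zero_mul, add_zero]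
      · simp only [range_one, sum_singleton, mul_zero, mul_one, zero_add]
        rw [A_zero (i := 0) (k := 1) (by omega), zero_mul, add_zero]
        have hA : A 0 0 = 1 := by simp [A]
        rw [hA, one_mul]
        unfold E
        by_cases hj : j = 0
        · subst hj; simp
        · rw [if_neg (by omega), if_neg (by omega)]
    · obtain ⟨a, ha | ha⟩ := Nat.even_or_odd' i <;>
        obtain ⟨d, hd | hd⟩ := Nat.even_or_odd' j <;> subst ha <;> subst hd
      · -- i = 2a, j = 2d  (a ≥ 1)
        have hIH := ih (a + d) (by omega) a d (2 * a + 1) (le_refl _) (by omega)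
        constructor
        · calc ∑ c ∈ range (2 * a + 1), (Cc (2 * a) (2 * c) * B (2 * c) (2 * d) +
                Cc (2 * a) (2 * c + 1) * B (2 * c + 1) (2 * d))
              = ∑ c ∈ range (2 * a + 1), Cc a c * B c d := by
                refine Finset.sum_congr rfl fun c _ => ?_
                rw [Cc_ee, Cc_eo, B_oe, zero_mul, zero_add]
          _ = if d < a then 1 else 0 := hIH.1
          _ = if 2 * d < 2 * a then 1 else 0 := by split_ifs <;> omega
        · calc ∑ c ∈ range (2 * a + 1), (A (2 * a) (2 * c) * E (2 * c) (2 * d) +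
                A (2 * a) (2 * c + 1) * E (2 * c + 1) (2 * d))
              = ∑ c ∈ range (2 * a + 1), A a c * E c d := by
                refine Finset.sum_congr rfl fun c _ => ?_
                rw [A_ee, A_eo, E_ee, E_oe, mul_zero, add_zero]
          _ = if d ≤ a then 1 else 0 := hIH.2
          _ = if 2 * d ≤ 2 * a then 1 else 0 := by split_ifs <;> omega
      · -- i = 2a, j = 2d + 1  (a ≥ 1)
        have hIH := ih (a + d) (by omega) a d (2 * a + 1) (le_refl _) (by omega)
        have hIH' := ih (a + (d + 1)) (by omega) a (d + 1) (2 * a + 1) (le_refl _) (by omega)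
        constructor
        · calc ∑ c ∈ range (2 * a + 1), (Cc (2 * a) (2 * c) * B (2 * c) (2 * d + 1) +
                Cc (2 * a) (2 * c + 1) * B (2 * c + 1) (2 * d + 1))
              = ∑ c ∈ range (2 * a + 1), Cc a c * B c d := by
                refine Finset.sum_congr rfl fun c _ => ?_
                rw [Cc_ee, Cc_eo, B_oo, zero_mul, zero_add]
          _ = if d < a then 1 else 0 := hIH.1
          _ = if 2 * d + 1 < 2 * a then 1 else 0 := by split_ifs <;> omega
        · calc ∑ c ∈ range (2 * a + 1), (A (2 * a) (2 * c) * E (2 * c) (2 * d + 1) +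
                A (2 * a) (2 * c + 1) * E (2 * c + 1) (2 * d + 1))
              = ∑ c ∈ range (2 * a + 1), Cc a c * B c d := by
                refine Finset.sum_congr rfl fun c _ => ?_
                rw [A_eo, E_eo, E_oo, mul_zero, zero_add]
          _ = if d < a then 1 else 0 := hIH.1
          _ = if 2 * d + 1 ≤ 2 * a then 1 else 0 := by split_ifs <;> omega
      · -- i = 2a + 1, j = 2d
        have hIH := ih (a + d) (by omega) a d (2 * a + 2) (le_refl _) (by omega)
        constructor
        · calc ∑ c ∈ range (2 * a + 1 + 1), (Cc (2 * a + 1) (2 * c) * B (2 * c) (2 * d) +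
                Cc (2 * a + 1) (2 * c + 1) * B (2 * c + 1) (2 * d))
              = ∑ c ∈ range (2 * a + 2), A a c * E c d := by
                refine Finset.sum_congr rfl fun c _ => ?_
                rw [Cc_oe, Cc_oo, B_ee, zero_mul, add_zero]
          _ = if d ≤ a then 1 else 0 := hIH.2
          _ = if 2 * d < 2 * a + 1 then 1 else 0 := by split_ifs <;> omega
        · calc ∑ c ∈ range (2 * a + 1 + 1), (A (2 * a + 1) (2 * c) * E (2 * c) (2 * d) +
                A (2 * a + 1) (2 * c + 1) * E (2 * c + 1) (2 * d))
              = ∑ c ∈ range (2 * a + 2), A a c * E c d := by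
                refine Finset.sum_congr rfl fun c _ => ?_
                rw [A_oe, A_oo, E_ee, E_oe, mul_zero, add_zero]
          _ = if d ≤ a then 1 else 0 := hIH.2
          _ = if 2 * d ≤ 2 * a + 1 then 1 else 0 := by split_ifs <;> omega
      · -- i = 2a + 1, j = 2d + 1
        have hIH' := ih (a + (d + 1)) (by omega) a (d + 1) (2 * a + 2) (le_refl _) (by omega)
        have hIH'' := ih (a + 1 + d) (by omega) (a + 1) d (2 * a + 2) (le_refl _) (by omega)
        constructor
        · calc ∑ c ∈ range (2 * a + 1 + 1), (Cc (2 * a + 1) (2 * c) * B (2 * c) (2 * d + 1) +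
                Cc (2 * a + 1) (2 * c + 1) * B (2 * c + 1) (2 * d + 1))
              = ∑ c ∈ range (2 * a + 2), A a c * E c (d + 1) := by
                refine Finset.sum_congr rfl fun c _ => ?_
                rw [Cc_oe, Cc_oo, B_eo, zero_mul, add_zero]
          _ = if d + 1 ≤ a then 1 else 0 := hIH'.2
          _ = if 2 * d + 1 < 2 * a + 1 then 1 else 0 := by split_ifs <;> omega
        · calc ∑ c ∈ range (2 * a + 1 + 1), (A (2 * a + 1) (2 * c) * E (2 * c) (2 * d + 1) +
                A (2 * a + 1) (2 * c + 1) * E (2 * c + 1) (2 * d + 1))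
              = ∑ c ∈ range (2 * a + 2), Cc (a + 1) c * B c d := by
                refine Finset.sum_congr rfl fun c _ => ?_
                rw [A_oo, E_eo, E_oo, mul_zero, zero_add]
          _ = if d < a + 1 then 1 else 0 := hIH''.1
          _ = if 2 * d + 1 ≤ 2 * a + 1 then 1 else 0 := by split_ifs <;> omega

lemma Usum (i j N : ℕ) (hN : i < N) :
    ∑ k ∈ range N, Cc i k * B k j = if j < i then 1 else 0 :=
  (UV (i + j) i j N (le_refl _) hN).1

lemma Vsum (i j N : ℕ) (hN : i < N) :
    ∑ k ∈ range N, A i k * E k j = if j ≤ i then 1 else 0 :=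
  (UV (i + j) i j N (le_refl _) hN).2

lemma Tsum (i j N : ℕ) (hN : i < N) :
    ∑ k ∈ range N, A i k * B k j = if i < j then 0 else if i = j then 1 else 2 := by
  have hTz : ∀ k, i + 1 ≤ k → A i k * B k j = 0 := by
    intro k hk; rw [A_zero (by omega), zero_mul]
  have h1 : ∑ k ∈ range N, A i k * B k j = ∑ k ∈ range (2 * (i + 1)), A i k * B k j := by
    rw [sum_range_shrink (by omega) hTz,
      sum_range_shrink (M := i + 1) (N := 2 * (i + 1)) (by omega) hTz]
  rw [h1, sum_range_double]
  obtain ⟨a, ha | ha⟩ := Nat.even_or_odd' i <;>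
    obtain ⟨d, hd | hd⟩ := Nat.even_or_odd' j <;> subst ha <;> subst hd
  · calc ∑ c ∈ range (2 * a + 1), (A (2 * a) (2 * c) * B (2 * c) (2 * d) +
          A (2 * a) (2 * c + 1) * B (2 * c + 1) (2 * d))
        = ∑ c ∈ range (2 * a + 1), (A a c * E c d + Cc a c * B c d) := by
          refine Finset.sum_congr rfl fun c _ => ?_
          rw [A_ee, A_eo, B_ee, B_oe]
    _ = (∑ c ∈ range (2 * a + 1), A a c * E c d) +
        ∑ c ∈ range (2 * a + 1), Cc a c * B c d := Finset.sum_add_distrib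
    _ = (if d ≤ a then 1 else 0) + (if d < a then 1 else 0) := by
        rw [Vsum a d _ (by omega), Usum a d _ (by omega)]
    _ = if 2 * a < 2 * d then 0 else if 2 * a = 2 * d then 1 else 2 := by
        split_ifs <;> omega
  · calc ∑ c ∈ range (2 * a + 1), (A (2 * a) (2 * c) * B (2 * c) (2 * d + 1) +
          A (2 * a) (2 * c + 1) * B (2 * c + 1) (2 * d + 1))
        = ∑ c ∈ range (2 * a + 1), (A a c * E c (d + 1) + Cc a c * B c d) := by
          refine Finset.sum_congr rfl fun c _ => ?_
          rw [A_ee, A_eo, B_eo, B_oo]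
    _ = (∑ c ∈ range (2 * a + 1), A a c * E c (d + 1)) +
        ∑ c ∈ range (2 * a + 1), Cc a c * B c d := Finset.sum_add_distrib
    _ = (if d + 1 ≤ a then 1 else 0) + (if d < a then 1 else 0) := by
        rw [Vsum a (d + 1) _ (by omega), Usum a d _ (by omega)]
    _ = if 2 * a < 2 * d + 1 then 0 else if 2 * a = 2 * d + 1 then 1 else 2 := by
        split_ifs <;> omega
  · calc ∑ c ∈ range (2 * a + 1 + 1), (A (2 * a + 1) (2 * c) * B (2 * c) (2 * d) +
          A (2 * a + 1) (2 * c + 1) * B (2 * c + 1) (2 * d))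
        = ∑ c ∈ range (2 * a + 2), (A a c * E c d + Cc (a + 1) c * B c d) := by
          refine Finset.sum_congr rfl fun c _ => ?_
          rw [A_oe, A_oo, B_ee, B_oe]
    _ = (∑ c ∈ range (2 * a + 2), A a c * E c d) +
        ∑ c ∈ range (2 * a + 2), Cc (a + 1) c * B c d := Finset.sum_add_distrib
    _ = (if d ≤ a then 1 else 0) + (if d < a + 1 then 1 else 0) := by
        rw [Vsum a d _ (by omega), Usum (a + 1) d _ (by omega)]
    _ = if 2 * a + 1 < 2 * d then 0 else if 2 * a + 1 = 2 * d then 1 else 2 := by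
        split_ifs <;> omega
  · calc ∑ c ∈ range (2 * a + 1 + 1), (A (2 * a + 1) (2 * c) * B (2 * c) (2 * d + 1) +
          A (2 * a + 1) (2 * c + 1) * B (2 * c + 1) (2 * d + 1))
        = ∑ c ∈ range (2 * a + 2), (A a c * E c (d + 1) + Cc (a + 1) c * B c d) := by
          refine Finset.sum_congr rfl fun c _ => ?_
          rw [A_oe, A_oo, B_eo, B_oo]
    _ = (∑ c ∈ range (2 * a + 2), A a c * E c (d + 1)) +
        ∑ c ∈ range (2 * a + 2), Cc (a + 1) c * B c d := Finset.sum_add_distrib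
    _ = (if d + 1 ≤ a then 1 else 0) + (if d < a + 1 then 1 else 0) := by
        rw [Vsum a (d + 1) _ (by omega), Usum (a + 1) d _ (by omega)]
    _ = if 2 * a + 1 < 2 * d + 1 then 0 else if 2 * a + 1 = 2 * d + 1 then 1 else 2 := by
        split_ifs <;> omega

lemma Tsum_Icc (i j : ℕ) :
    ∑ k ∈ Finset.Icc j i, ((i + k).choose (2 * k) % 2) * ((2 * k + 1).choose (k - j) % 2) =
      if i < j then 0 else if i = j then 1 else 2 := by
  have h : ∑ k ∈ Finset.Icc j i, A i k * B k j = ∑ k ∈ range (i + 1), A i k * B k j := by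
    refine Finset.sum_subset ?_ ?_
    · intro x hx
      simp only [Finset.mem_Icc] at hx
      simp only [Finset.mem_range]; omega
    · intro x hx hx2
      simp only [Finset.mem_range] at hx
      simp only [Finset.mem_Icc, not_and, not_le] at hx2
      have : x < j := by omega
      unfold B
      rw [if_neg (by omega), mul_zero]
  have h2 : ∑ k ∈ Finset.Icc j i, A i k * B k j =
      ∑ k ∈ Finset.Icc j i, ((i + k).choose (2 * k) % 2) * ((2 * k + 1).choose (k - j) % 2) := by
    refine Finset.sum_congr rfl fun k hk => ?_
    simp only [Finset.mem_Icc] at hk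
    unfold A B
    rw [if_pos hk.1]
  rw [← h2, h, Tsum i j (i + 1) (by omega)]

end MLaux

/-- The product `M · L` (entries reduced mod 2 to `{0,1}` before multiplying over `ℤ`) has
entries `0` above the diagonal, `1` on the diagonal and `2` below the diagonal:
`∑_{k=j}^{i} (binom(i+k, 2k) mod 2)·(binom(2k+1, k-j) mod 2)` equals `0` if `i < j`,
`1` if `i = j` and `2` if `i > j`. -/
theorem M_mul_L_entries (i j : ℕ) :
    ∑ k ∈ Finset.Icc j i,
        (((i + k).choose (2 * k) % 2 : ℕ) : ℤ) * (((2 * k + 1).choose (k - j) % 2 : ℕ) : ℤ) =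
      if i < j then 0 else if i = j then 1 else 2 := by
  have h := MLaux.Tsum_Icc i j
  have : ((∑ k ∈ Finset.Icc j i,
      ((i + k).choose (2 * k) % 2) * ((2 * k + 1).choose (k - j) % 2) : ℕ) : ℤ) =
      ∑ k ∈ Finset.Icc j i,
        (((i + k).choose (2 * k) % 2 : ℕ) : ℤ) * (((2 * k + 1).choose (k - j) % 2 : ℕ) : ℤ) := by
    push_cast; ring
  rw [← this, h]
  split_ifs <;> norm_num
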